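/- arXiv:1205.3776 — 5 statements merged into one kernel-verified Lean document; each statement's English description precedes it below -/
import Mathlib

section
/- The 10 degree-3 equations vanish on all trifocal tensors: for every triple of complex 3×4 matrices A₁, A₂, A₃ with associated trifocal tensor T, and for every x ∈ ℂ³, the 3×3 matrix M^C_x(T) with (i,j)-entry ∑ₖ xₖ T(i,j,k) has determinant zero. -/
open MvPolynomial Matrix

noncomputable section

/-- Tensors in `ℂ³ ⊗ ℂ³ ⊗ ℂ³`, given by their 27 entries. -/
abbrev Tensor : Type := Fin 3 × Fin 3 × Fin 3 → ℂ

/-- The polynomial ring in the 27 tensor entries. -/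
abbrev R : Type := MvPolynomial (Fin 3 × Fin 3 × Fin 3) ℂ

/-- The trifocal tensor associated to three camera matrices `A₁, A₂, A₃`:
`T (i,j,k)` is the determinant of the 4×4 matrix whose rows are the `i`-th row of `A₁`,
the `j`-th row of `A₂`, and the two rows of `A₃` with index different from `k`,
in increasing order of index. -/
def trifocalTensor (A₁ A₂ A₃ : Matrix (Fin 3) (Fin 4) ℂ) : Tensor := fun p =>
  (Matrix.of ![A₁ p.1, A₂ p.2.1, A₃ (p.2.2.succAbove 0), A₃ (p.2.2.succAbove 1)]).det

/-- The set of all trifocal tensors. -/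
def TT : Set Tensor :=
  {T | ∃ A₁ A₂ A₃ : Matrix (Fin 3) (Fin 4) ℂ, trifocalTensor A₁ A₂ A₃ = T}

/-- `I(X)_d`: the ℂ-vector space of polynomials homogeneous of degree `d`
vanishing at every trifocal tensor. -/
def IX (d : ℕ) : Submodule ℂ R :=
  MvPolynomial.homogeneousSubmodule (Fin 3 × Fin 3 × Fin 3) ℂ d ⊓
    (MvPolynomial.vanishingIdeal ℂ TT).restrictScalars ℂ

/-- `M^C_x(T)`: the 3×3 matrix with `(i,j)`-entry `∑ₖ xₖ T (i,j,k)`. -/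
def MC (x : Fin 3 → ℂ) (T : Tensor) : Matrix (Fin 3) (Fin 3) ℂ :=
  Matrix.of fun i j => ∑ k, x k * T (i, j, k)

/-- `M^B_y(T)`: the 3×3 matrix with `(i,k)`-entry `∑ⱼ yⱼ T (i,j,k)`. -/
def MB (y : Fin 3 → ℂ) (T : Tensor) : Matrix (Fin 3) (Fin 3) ℂ :=
  Matrix.of fun i k => ∑ j, y j * T (i, j, k)

/-- `M^A_z(T)`: the 3×3 matrix with `(j,k)`-entry `∑ᵢ zᵢ T (i,j,k)`. -/
def MA (z : Fin 3 → ℂ) (T : Tensor) : Matrix (Fin 3) (Fin 3) ℂ :=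
  Matrix.of fun j k => ∑ i, z i * T (i, j, k)

/-- The variety `P-Rank^{2,2,2}` of tensors all of whose three projections are
everywhere singular. -/
def PRank222 : Set Tensor :=
  {T | (∀ z, (MA z T).det = 0) ∧ (∀ y, (MB y T).det = 0) ∧ (∀ x, (MC x T).det = 0)}

/-- The action of `GL₃(ℂ)³` on tensors. -/
def act (g₁ g₂ g₃ : GL (Fin 3) ℂ) (T : Tensor) : Tensor := fun p =>
  ∑ i', ∑ j', ∑ k',
    (g₁ : Matrix (Fin 3) (Fin 3) ℂ) p.1 i' *
      (g₂ : Matrix (Fin 3) (Fin 3) ℂ) p.2.1 j' *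
        (g₃ : Matrix (Fin 3) (Fin 3) ℂ) p.2.2 k' * T (i', j', k')

/-- The Zariski closure of a set of tensors: the zero locus of its vanishing ideal. -/
def zariskiClosure (S : Set Tensor) : Set Tensor :=
  MvPolynomial.zeroLocus ℂ (MvPolynomial.vanishingIdeal ℂ S)

/-- The Levi-Civita (alternating) tensor `ε`. -/
def eps : Tensor := fun p =>
  if p = (0, 1, 2) ∨ p = (1, 2, 0) ∨ p = (2, 0, 1) then 1
  else if p = (0, 2, 1) ∨ p = (1, 0, 2) ∨ p = (2, 1, 0) then -1
  else 0

/-- The `GL₃(ℂ)³`-orbit of the Levi-Civita tensor. -/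
def epsOrbit : Set Tensor :=
  {T | ∃ g₁ g₂ g₃ : GL (Fin 3) ℂ, act g₁ g₂ g₃ eps = T}

/-- `Sub_{2,3,3}`: tensors annihilated in the first factor by a nonzero covector. -/
def Sub233 : Set Tensor :=
  {T | ∃ l : Fin 3 → ℂ, l ≠ 0 ∧ ∀ j k, ∑ i, l i * T (i, j, k) = 0}

/-- `Sub_{3,2,3}`: tensors annihilated in the second factor by a nonzero covector. -/
def Sub323 : Set Tensor :=
  {T | ∃ m : Fin 3 → ℂ, m ≠ 0 ∧ ∀ i k, ∑ j, m j * T (i, j, k) = 0}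

/-- The normal form `T₀` of a general trifocal tensor (0-indexed entries
`(0,1,0), (2,0,0), (1,1,1), (2,2,2)` equal to `1`). -/
def T₀ : Tensor := fun p =>
  if p = (0, 1, 0) ∨ p = (2, 0, 0) ∨ p = (1, 1, 1) ∨ p = (2, 2, 2) then 1 else 0

/-- The 3×9 flattening of a tensor in the first index. -/
def flatten1 (T : Tensor) : Matrix (Fin 3) (Fin 3 × Fin 3) ℂ :=
  Matrix.of fun i q => T (i, q.1, q.2)

/-- The 3×9 flattening of a tensor in the second index. -/
def flatten2 (T : Tensor) : Matrix (Fin 3) (Fin 3 × Fin 3) ℂ :=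
  Matrix.of fun j q => T (q.1, j, q.2)

/-- The 3×9 flattening of a tensor in the third index. -/
def flatten3 (T : Tensor) : Matrix (Fin 3) (Fin 3 × Fin 3) ℂ :=
  Matrix.of fun k q => T (q.1, q.2, k)


section AuxTrifocal

private lemma updRow1 (w z c u v : Fin 4 → ℂ) :
    (Matrix.of ![w, z, u, v]).updateRow 1 c = Matrix.of ![w, c, u, v] := by
  ext i j
  fin_cases i <;> simp [Matrix.updateRow_apply]

private lemma updRow2 (w z c u v : Fin 4 → ℂ) :
    (Matrix.of ![w, z, u, v]).updateRow 2 c = Matrix.of ![w, z, c, v] := by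
  ext i j
  fin_cases i <;> simp [Matrix.updateRow_apply]

/-- The key rank lemma: a 3×3 matrix whose `(i,j)` entry is `det ![a i, b j, u, v]`
is always singular. -/
private lemma key (a b : Fin 3 → Fin 4 → ℂ) (u v : Fin 4 → ℂ) :
    (Matrix.of fun i j => (Matrix.of ![a i, b j, u, v]).det).det = 0 := by
  by_cases hLI : LinearIndependent ℂ ![u, v]
  · -- rank argument
    let L : (Fin 4 → ℂ) →ₗ[ℂ] (Fin 3 → ℂ) :=
      { toFun := fun z i => (Matrix.of ![a i, z, u, v]).det
        map_add' := fun z z' => funext fun i => by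
          show (Matrix.of ![a i, z + z', u, v]).det =
            (Matrix.of ![a i, z, u, v]).det + (Matrix.of ![a i, z', u, v]).det
          rw [← updRow1 (a i) z (z + z') u v, Matrix.det_updateRow_add,
            updRow1, updRow1]
        map_smul' := fun c z => funext fun i => by
          show (Matrix.of ![a i, c • z, u, v]).det = c * (Matrix.of ![a i, z, u, v]).det
          rw [← updRow1 (a i) z (c • z) u v, Matrix.det_updateRow_smul, updRow1] }
    have hu : L u = 0 := funext fun i =>
      Matrix.det_zero_of_row_eq (M := Matrix.of ![a i, u, u, v]) (i := 1) (j := 2)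
        (by decide) rfl
    have hv : L v = 0 := funext fun i =>
      Matrix.det_zero_of_row_eq (M := Matrix.of ![a i, v, u, v]) (i := 1) (j := 3)
        (by decide) rfl
    have hker : Submodule.span ℂ (Set.range ![u, v]) ≤ LinearMap.ker L := by
      rw [Submodule.span_le]
      rintro w ⟨k, rfl⟩
      fin_cases k
      · exact LinearMap.mem_ker.2 hu
      · exact LinearMap.mem_ker.2 hv
    have hkerrank : 2 ≤ Module.finrank ℂ (LinearMap.ker L) := by
      have hspan := finrank_span_eq_card (R := ℂ) hLI
      calc (2 : ℕ) = Module.finrank ℂ (Submodule.span ℂ (Set.range ![u, v])) := by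
            rw [hspan]; simp
        _ ≤ _ := Submodule.finrank_mono hker
    have hrange : Module.finrank ℂ (LinearMap.range L) ≤ 2 := by
      have h4 := LinearMap.finrank_range_add_finrank_ker L
      have hdim : Module.finrank ℂ (Fin 4 → ℂ) = 4 := by simp
      omega
    by_contra hdet
    have hunit : IsUnit (Matrix.of fun i j => (Matrix.of ![a i, b j, u, v]).det) :=
      (Matrix.isUnit_iff_isUnit_det _).2 (isUnit_iff_ne_zero.2 hdet)
    have hcols := Matrix.linearIndependent_cols_iff_isUnit.2 hunit
    have h3 := linearIndependent_iff_card_le_finrank_span.1 hcols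
    rw [Fintype.card_fin, Set.finrank] at h3
    have hsub : Submodule.span ℂ
        (Set.range (Matrix.of fun i j => (Matrix.of ![a i, b j, u, v]).det).col) ≤
          LinearMap.range L := by
      rw [Submodule.span_le]
      rintro w ⟨j, rfl⟩
      exact ⟨b j, rfl⟩
    have hle := Submodule.finrank_mono hsub
    omega
  · rw [linearIndependent_fin2] at hLI
    push_neg at hLI
    simp only [Matrix.cons_val_one, Matrix.head_cons, Matrix.cons_val_zero] at hLI
    by_cases hv0 : v = 0
    · have hM : (Matrix.of fun i j => (Matrix.of ![a i, b j, u, v]).det) = 0 := by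
        ext i j
        show (Matrix.of ![a i, b j, u, v]).det = 0
        exact Matrix.det_eq_zero_of_row_eq_zero 3 (fun t => by simp [hv0])
      rw [hM]
      exact Matrix.det_zero
    · obtain ⟨c, hc⟩ := hLI hv0
      have hM : (Matrix.of fun i j => (Matrix.of ![a i, b j, u, v]).det) = 0 := by
        ext i j
        show (Matrix.of ![a i, b j, u, v]).det = 0
        rw [← hc, ← updRow2 (a i) (b j) (c • v) v v, Matrix.det_updateRow_smul, updRow2]
        rw [Matrix.det_zero_of_row_eq (M := Matrix.of ![a i, b j, v, v]) (i := 2) (j := 3)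
          (by decide) rfl]
        simp
      rw [hM]
      exact Matrix.det_zero

set_option maxHeartbeats 1000000 in
private lemma expand0 (w y r0 r1 r2 : Fin 4 → ℂ) (x0 x1 x2 : ℂ) :
    (Matrix.of ![w, y, x0 • r1 + x1 • r0, x0 • r2 - x2 • r0]).det =
      x0 * (x0 * (Matrix.of ![w, y, r1, r2]).det + x1 * (Matrix.of ![w, y, r0, r2]).det
        + x2 * (Matrix.of ![w, y, r0, r1]).det) := by
  simp (config := {decide := true}) [Matrix.det_succ_row_zero, Fin.sum_univ_succ, Fin.succAbove]
  ring

set_option maxHeartbeats 1000000 in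
private lemma expand1 (w y r0 r1 r2 : Fin 4 → ℂ) (x0 x1 x2 : ℂ) :
    (Matrix.of ![w, y, x1 • r0 + x0 • r1, x1 • r2 + x2 • r1]).det =
      x1 * (x0 * (Matrix.of ![w, y, r1, r2]).det + x1 * (Matrix.of ![w, y, r0, r2]).det
        + x2 * (Matrix.of ![w, y, r0, r1]).det) := by
  simp (config := {decide := true}) [Matrix.det_succ_row_zero, Fin.sum_univ_succ, Fin.succAbove]
  ring

set_option maxHeartbeats 1000000 in
private lemma expand2 (w y r0 r1 r2 : Fin 4 → ℂ) (x0 x1 x2 : ℂ) :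
    (Matrix.of ![w, y, x2 • r0 - x0 • r2, x2 • r1 + x1 • r2]).det =
      x2 * (x0 * (Matrix.of ![w, y, r1, r2]).det + x1 * (Matrix.of ![w, y, r0, r2]).det
        + x2 * (Matrix.of ![w, y, r0, r1]).det) := by
  simp (config := {decide := true}) [Matrix.det_succ_row_zero, Fin.sum_univ_succ, Fin.succAbove]
  ring

end AuxTrifocal

/-- The ten degree-3 equations vanish on all trifocal tensors. -/
theorem det_MC_trifocal_eq_zero (A₁ A₂ A₃ : Matrix (Fin 3) (Fin 4) ℂ) (x : Fin 3 → ℂ) :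
    (MC x (trifocalTensor A₁ A₂ A₃)).det = 0 := by
  have hMC : MC x (trifocalTensor A₁ A₂ A₃) = Matrix.of (fun i j =>
      x 0 * (Matrix.of ![A₁ i, A₂ j, A₃ 1, A₃ 2]).det
      + x 1 * (Matrix.of ![A₁ i, A₂ j, A₃ 0, A₃ 2]).det
      + x 2 * (Matrix.of ![A₁ i, A₂ j, A₃ 0, A₃ 1]).det) := by
    ext i j
    simp only [MC, Matrix.of_apply, trifocalTensor, Fin.sum_univ_three,
      show ((0 : Fin 3)).succAbove 0 = 1 by decide,
      show ((0 : Fin 3)).succAbove 1 = 2 by decide,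
      show ((1 : Fin 3)).succAbove 0 = 0 by decide,
      show ((1 : Fin 3)).succAbove 1 = 2 by decide,
      show ((2 : Fin 3)).succAbove 0 = 0 by decide,
      show ((2 : Fin 3)).succAbove 1 = 1 by decide]
  rw [hMC]
  rcases ne_or_eq (x 0) 0 with h0 | h0
  · have hk := key (fun i => A₁ i) (fun j => A₂ j)
      (x 0 • A₃ 1 + x 1 • A₃ 0) (x 0 • A₃ 2 - x 2 • A₃ 0)
    have heq : (Matrix.of fun i j =>
        (Matrix.of ![A₁ i, A₂ j, x 0 • A₃ 1 + x 1 • A₃ 0, x 0 • A₃ 2 - x 2 • A₃ 0]).det)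
        = x 0 • Matrix.of (fun i j =>
          x 0 * (Matrix.of ![A₁ i, A₂ j, A₃ 1, A₃ 2]).det
          + x 1 * (Matrix.of ![A₁ i, A₂ j, A₃ 0, A₃ 2]).det
          + x 2 * (Matrix.of ![A₁ i, A₂ j, A₃ 0, A₃ 1]).det) := by
      ext i j
      simp only [Matrix.of_apply, Matrix.smul_apply, smul_eq_mul]
      rw [expand0]
    rw [heq, Matrix.det_smul, Fintype.card_fin] at hk
    exact (mul_eq_zero.1 hk).resolve_left (pow_ne_zero 3 h0)
  rcases ne_or_eq (x 1) 0 with h1 | h1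
  · have hk := key (fun i => A₁ i) (fun j => A₂ j)
      (x 1 • A₃ 0 + x 0 • A₃ 1) (x 1 • A₃ 2 + x 2 • A₃ 1)
    have heq : (Matrix.of fun i j =>
        (Matrix.of ![A₁ i, A₂ j, x 1 • A₃ 0 + x 0 • A₃ 1, x 1 • A₃ 2 + x 2 • A₃ 1]).det)
        = x 1 • Matrix.of (fun i j =>
          x 0 * (Matrix.of ![A₁ i, A₂ j, A₃ 1, A₃ 2]).det
          + x 1 * (Matrix.of ![A₁ i, A₂ j, A₃ 0, A₃ 2]).det
          + x 2 * (Matrix.of ![A₁ i, A₂ j, A₃ 0, A₃ 1]).det) := by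
      ext i j
      simp only [Matrix.of_apply, Matrix.smul_apply, smul_eq_mul]
      rw [expand1]
    rw [heq, Matrix.det_smul, Fintype.card_fin] at hk
    exact (mul_eq_zero.1 hk).resolve_left (pow_ne_zero 3 h1)
  rcases ne_or_eq (x 2) 0 with h2 | h2
  · have hk := key (fun i => A₁ i) (fun j => A₂ j)
      (x 2 • A₃ 0 - x 0 • A₃ 2) (x 2 • A₃ 1 + x 1 • A₃ 2)
    have heq : (Matrix.of fun i j =>
        (Matrix.of ![A₁ i, A₂ j, x 2 • A₃ 0 - x 0 • A₃ 2, x 2 • A₃ 1 + x 1 • A₃ 2]).det)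
        = x 2 • Matrix.of (fun i j =>
          x 0 * (Matrix.of ![A₁ i, A₂ j, A₃ 1, A₃ 2]).det
          + x 1 * (Matrix.of ![A₁ i, A₂ j, A₃ 0, A₃ 2]).det
          + x 2 * (Matrix.of ![A₁ i, A₂ j, A₃ 0, A₃ 1]).det) := by
      ext i j
      simp only [Matrix.of_apply, Matrix.smul_apply, smul_eq_mul]
      rw [expand2]
    rw [heq, Matrix.det_smul, Fintype.card_fin] at hk
    exact (mul_eq_zero.1 hk).resolve_left (pow_ne_zero 3 h2)
  · have hM : Matrix.of (fun i j =>
        x 0 * (Matrix.of ![A₁ i, A₂ j, A₃ 1, A₃ 2]).det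
        + x 1 * (Matrix.of ![A₁ i, A₂ j, A₃ 0, A₃ 2]).det
        + x 2 * (Matrix.of ![A₁ i, A₂ j, A₃ 0, A₃ 1]).det) = (0 : Matrix (Fin 3) (Fin 3) ℂ) := by
      ext i j
      simp [h0, h1, h2]
    rw [hM]
    exact Matrix.det_zero
end
end

section
/- The Levi-Civita tensor ε is not contained in any of the other three irreducible components of the zero set of the cubics: ε ∉ Sub_{2,3,3}, ε ∉ Sub_{3,2,3}, and ε does not lie in the Zariski closure X of the set TT of trifocal tensors. -/
open MvPolynomial Matrix

noncomputable section

def d4e {S : Type*} [CommRing S] (u v w x : Fin 4 → S) : S :=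
  u 0*v 1*w 2*x 3 - u 0*v 1*w 3*x 2 - u 0*v 2*w 1*x 3 + u 0*v 2*w 3*x 1 + u 0*v 3*w 1*x 2 - u 0*v 3*w 2*x 1 - u 1*v 0*w 2*x 3 + u 1*v 0*w 3*x 2 + u 1*v 2*w 0*x 3 - u 1*v 2*w 3*x 0 - u 1*v 3*w 0*x 2 + u 1*v 3*w 2*x 0 + u 2*v 0*w 1*x 3 - u 2*v 0*w 3*x 1 - u 2*v 1*w 0*x 3 + u 2*v 1*w 3*x 0 + u 2*v 3*w 0*x 1 - u 2*v 3*w 1*x 0 - u 3*v 0*w 1*x 2 + u 3*v 0*w 2*x 1 + u 3*v 1*w 0*x 2 - u 3*v 1*w 2*x 0 - u 3*v 2*w 0*x 1 + u 3*v 2*w 1*x 0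

lemma omega_id {S : Type*} [CommRing S] (u1 u2 v1 v2 c d : Fin 4 → S) :
    d4e u1 v1 c d * d4e u2 v2 c d - d4e u1 v2 c d * d4e u2 v1 c d
      = d4e u1 u2 c d * d4e v1 v2 c d := by
  simp only [d4e]
  ring

abbrev Rg : Type := MvPolynomial ((Fin 3 × Fin 4) ⊕ (Fin 3 × Fin 4)) ℂ
def ag (l : Fin 3) : Fin 4 → Rg := fun c => X (Sum.inl (l, c))
def cg (k : Fin 3) : Fin 4 → Rg := fun c => X (Sum.inr (k, c))
def νg (l : Fin 3) : Rg := d4e (ag l) (cg 0) (cg 1) (cg 2)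

def xgfun : Fin 3 → Fin 3 → Rg := fun K l =>
  match K, l with
  | 0, 0 => d4e (ag 1) (ag 2) (cg 1) (cg 2)
  | 0, 1 => -(d4e (ag 0) (ag 2) (cg 1) (cg 2))
  | 0, 2 => d4e (ag 0) (ag 1) (cg 1) (cg 2)
  | 1, 0 => -(d4e (ag 1) (ag 2) (cg 0) (cg 2))
  | 1, 1 => d4e (ag 0) (ag 2) (cg 0) (cg 2)
  | 1, 2 => -(d4e (ag 0) (ag 1) (cg 0) (cg 2))
  | 2, 0 => d4e (ag 1) (ag 2) (cg 0) (cg 1)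
  | 2, 1 => -(d4e (ag 0) (ag 2) (cg 0) (cg 1))
  | 2, 2 => d4e (ag 0) (ag 1) (cg 0) (cg 1)

lemma hker0 : xgfun 0 0 * νg 0 + xgfun 0 1 * νg 1 + xgfun 0 2 * νg 2 = 0 := by
  simp only [xgfun, νg, d4e]
  ring
lemma hker1 : xgfun 1 0 * νg 0 + xgfun 1 1 * νg 1 + xgfun 1 2 * νg 2 = 0 := by
  simp only [xgfun, νg, d4e]
  ring
lemma hker2 : xgfun 2 0 * νg 0 + xgfun 2 1 * νg 1 + xgfun 2 2 * νg 2 = 0 := by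
  simp only [xgfun, νg, d4e]
  ring

lemma det3_eq_zero {S : Type*} [CommRing S] [IsDomain S] (M : Matrix (Fin 3) (Fin 3) S)
    (n0 n1 n2 : S)
    (h0 : M 0 0 * n0 + M 0 1 * n1 + M 0 2 * n2 = 0)
    (h1 : M 1 0 * n0 + M 1 1 * n1 + M 1 2 * n2 = 0)
    (h2 : M 2 0 * n0 + M 2 1 * n1 + M 2 2 * n2 = 0)
    (hn : n0 ≠ 0) : M.det = 0 := by
  have key : n0 * M.det = 0 := by
    rw [Matrix.det_fin_three]
    linear_combination (M 1 1 * M 2 2 - M 1 2 * M 2 1) * h0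
      - (M 0 1 * M 2 2 - M 0 2 * M 2 1) * h1 + (M 0 1 * M 1 2 - M 0 2 * M 1 1) * h2
  exact (mul_eq_zero.mp key).resolve_left hn

lemma nu0_ne : νg 0 ≠ 0 := by
  intro h
  have h2 := congrArg (eval (Sum.elim (fun q : Fin 3 × Fin 4 => if q.2 = 0 then (1:ℂ) else 0)
      (fun q : Fin 3 × Fin 4 => if q.2 = Fin.succ q.1 then (1:ℂ) else 0))) h
  simp only [νg, d4e, ag, cg, map_sub, map_add, map_mul, eval_X, Sum.elim_inl, Sum.elim_inr, map_zero] at h2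
  norm_num [Fin.ext_iff] at h2

lemma xg_det : (Matrix.of xgfun).det = 0 :=
  det3_eq_zero _ (νg 0) (νg 1) (νg 2) hker0 hker1 hker2 nu0_ne

lemma map_d4e {S S' : Type*} [CommRing S] [CommRing S'] (f : S →+* S') (u v w x : Fin 4 → S) :
    f (d4e u v w x) = d4e (f ∘ u) (f ∘ v) (f ∘ w) (f ∘ x) := by
  simp [d4e]

def xCfun (A₁ A₃ : Matrix (Fin 3) (Fin 4) ℂ) : Fin 3 → Fin 3 → ℂ := fun K l =>
  match K, l with
  | 0, 0 => d4e (A₁ 1) (A₁ 2) (A₃ 1) (A₃ 2)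
  | 0, 1 => -(d4e (A₁ 0) (A₁ 2) (A₃ 1) (A₃ 2))
  | 0, 2 => d4e (A₁ 0) (A₁ 1) (A₃ 1) (A₃ 2)
  | 1, 0 => -(d4e (A₁ 1) (A₁ 2) (A₃ 0) (A₃ 2))
  | 1, 1 => d4e (A₁ 0) (A₁ 2) (A₃ 0) (A₃ 2)
  | 1, 2 => -(d4e (A₁ 0) (A₁ 1) (A₃ 0) (A₃ 2))
  | 2, 0 => d4e (A₁ 1) (A₁ 2) (A₃ 0) (A₃ 1)
  | 2, 1 => -(d4e (A₁ 0) (A₁ 2) (A₃ 0) (A₃ 1))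
  | 2, 2 => d4e (A₁ 0) (A₁ 1) (A₃ 0) (A₃ 1)

lemma xC_det (A₁ A₃ : Matrix (Fin 3) (Fin 4) ℂ) : (Matrix.of (xCfun A₁ A₃)).det = 0 := by
  have h := congrArg (eval (Sum.elim (fun q : Fin 3 × Fin 4 => A₁ q.1 q.2)
      (fun q : Fin 3 × Fin 4 => A₃ q.1 q.2))) xg_det
  rw [map_zero, RingHom.map_det] at h
  convert h using 2
  ext K l
  fin_cases K <;> fin_cases l <;>
    simp [xCfun, xgfun, RingHom.mapMatrix_apply, map_d4e, ag, cg, Function.comp_def]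


lemma det4_expand (r0 r1 r2 r3 : Fin 4 → ℂ) :
    (Matrix.of ![r0, r1, r2, r3]).det = d4e r0 r1 r2 r3 := by
  simp only [d4e]
  simp [Matrix.det_succ_row_zero, Fin.sum_univ_succ]
  norm_num [show (Fin.succ 2 : Fin 4) = 3 from rfl, show (Fin.castSucc 2 : Fin 4) = 2 from rfl,
    show (Fin.succAbove (2 : Fin 4) (2 : Fin 3)) = 3 from rfl, show (Fin.succAbove (1 : Fin 4) (2 : Fin 3)) = 3 from rfl,
    show (Fin.succAbove (3 : Fin 4) (2 : Fin 3)) = 2 from rfl]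
  ring

lemma trif0 (A₁ A₂ A₃ : Matrix (Fin 3) (Fin 4) ℂ) (i j : Fin 3) :
    trifocalTensor A₁ A₂ A₃ (i, j, 0) = d4e (A₁ i) (A₂ j) (A₃ 1) (A₃ 2) := det4_expand _ _ _ _
lemma trif1 (A₁ A₂ A₃ : Matrix (Fin 3) (Fin 4) ℂ) (i j : Fin 3) :
    trifocalTensor A₁ A₂ A₃ (i, j, 1) = d4e (A₁ i) (A₂ j) (A₃ 0) (A₃ 2) := det4_expand _ _ _ _
lemma trif2 (A₁ A₂ A₃ : Matrix (Fin 3) (Fin 4) ℂ) (i j : Fin 3) :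
    trifocalTensor A₁ A₂ A₃ (i, j, 2) = d4e (A₁ i) (A₂ j) (A₃ 0) (A₃ 1) := det4_expand _ _ _ _
def pfun : Fin 3 → Fin 3 → R := fun K l =>
  match K, l with
  | 0, 0 => X (1, 1, 0) * X (2, 2, 0) - X (1, 2, 0) * X (2, 1, 0)
  | 0, 1 => X (0, 2, 0) * X (2, 1, 0) - X (0, 1, 0) * X (2, 2, 0)
  | 0, 2 => X (0, 1, 0) * X (1, 2, 0) - X (0, 2, 0) * X (1, 1, 0)
  | 1, 0 => X (1, 2, 1) * X (2, 0, 1) - X (1, 0, 1) * X (2, 2, 1)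
  | 1, 1 => X (0, 0, 1) * X (2, 2, 1) - X (0, 2, 1) * X (2, 0, 1)
  | 1, 2 => X (0, 2, 1) * X (1, 0, 1) - X (0, 0, 1) * X (1, 2, 1)
  | 2, 0 => X (1, 0, 2) * X (2, 1, 2) - X (1, 1, 2) * X (2, 0, 2)
  | 2, 1 => X (0, 1, 2) * X (2, 0, 2) - X (0, 0, 2) * X (2, 1, 2)
  | 2, 2 => X (0, 0, 2) * X (1, 1, 2) - X (0, 1, 2) * X (1, 0, 2)

def pPoly : R := (Matrix.of pfun).det

lemma hent00 (A₁ A₂ A₃ : Matrix (Fin 3) (Fin 4) ℂ) :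
    eval (trifocalTensor A₁ A₂ A₃) (pfun 0 0) = d4e (A₂ 1) (A₂ 2) (A₃ 1) (A₃ 2) * (d4e (A₁ 1) (A₁ 2) (A₃ 1) (A₃ 2)) := by
  simp only [pfun, map_sub, _root_.map_mul, eval_X, trif0, trif1, trif2]
  linear_combination omega_id (A₁ 1) (A₁ 2) (A₂ 1) (A₂ 2) (A₃ 1) (A₃ 2)

lemma hent01 (A₁ A₂ A₃ : Matrix (Fin 3) (Fin 4) ℂ) :
    eval (trifocalTensor A₁ A₂ A₃) (pfun 0 1) = d4e (A₂ 1) (A₂ 2) (A₃ 1) (A₃ 2) * (-(d4e (A₁ 0) (A₁ 2) (A₃ 1) (A₃ 2))) := by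
  simp only [pfun, map_sub, _root_.map_mul, eval_X, trif0, trif1, trif2]
  linear_combination (-1 : ℂ) * omega_id (A₁ 0) (A₁ 2) (A₂ 1) (A₂ 2) (A₃ 1) (A₃ 2)

lemma hent02 (A₁ A₂ A₃ : Matrix (Fin 3) (Fin 4) ℂ) :
    eval (trifocalTensor A₁ A₂ A₃) (pfun 0 2) = d4e (A₂ 1) (A₂ 2) (A₃ 1) (A₃ 2) * (d4e (A₁ 0) (A₁ 1) (A₃ 1) (A₃ 2)) := by
  simp only [pfun, map_sub, _root_.map_mul, eval_X, trif0, trif1, trif2]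
  linear_combination omega_id (A₁ 0) (A₁ 1) (A₂ 1) (A₂ 2) (A₃ 1) (A₃ 2)

lemma hent10 (A₁ A₂ A₃ : Matrix (Fin 3) (Fin 4) ℂ) :
    eval (trifocalTensor A₁ A₂ A₃) (pfun 1 0) = d4e (A₂ 0) (A₂ 2) (A₃ 0) (A₃ 2) * (-(d4e (A₁ 1) (A₁ 2) (A₃ 0) (A₃ 2))) := by
  simp only [pfun, map_sub, _root_.map_mul, eval_X, trif0, trif1, trif2]
  linear_combination (-1 : ℂ) * omega_id (A₁ 1) (A₁ 2) (A₂ 0) (A₂ 2) (A₃ 0) (A₃ 2)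

lemma hent11 (A₁ A₂ A₃ : Matrix (Fin 3) (Fin 4) ℂ) :
    eval (trifocalTensor A₁ A₂ A₃) (pfun 1 1) = d4e (A₂ 0) (A₂ 2) (A₃ 0) (A₃ 2) * (d4e (A₁ 0) (A₁ 2) (A₃ 0) (A₃ 2)) := by
  simp only [pfun, map_sub, _root_.map_mul, eval_X, trif0, trif1, trif2]
  linear_combination omega_id (A₁ 0) (A₁ 2) (A₂ 0) (A₂ 2) (A₃ 0) (A₃ 2)

lemma hent12 (A₁ A₂ A₃ : Matrix (Fin 3) (Fin 4) ℂ) :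
    eval (trifocalTensor A₁ A₂ A₃) (pfun 1 2) = d4e (A₂ 0) (A₂ 2) (A₃ 0) (A₃ 2) * (-(d4e (A₁ 0) (A₁ 1) (A₃ 0) (A₃ 2))) := by
  simp only [pfun, map_sub, _root_.map_mul, eval_X, trif0, trif1, trif2]
  linear_combination (-1 : ℂ) * omega_id (A₁ 0) (A₁ 1) (A₂ 0) (A₂ 2) (A₃ 0) (A₃ 2)

lemma hent20 (A₁ A₂ A₃ : Matrix (Fin 3) (Fin 4) ℂ) :
    eval (trifocalTensor A₁ A₂ A₃) (pfun 2 0) = d4e (A₂ 0) (A₂ 1) (A₃ 0) (A₃ 1) * (d4e (A₁ 1) (A₁ 2) (A₃ 0) (A₃ 1)) := by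
  simp only [pfun, map_sub, _root_.map_mul, eval_X, trif0, trif1, trif2]
  linear_combination omega_id (A₁ 1) (A₁ 2) (A₂ 0) (A₂ 1) (A₃ 0) (A₃ 1)

lemma hent21 (A₁ A₂ A₃ : Matrix (Fin 3) (Fin 4) ℂ) :
    eval (trifocalTensor A₁ A₂ A₃) (pfun 2 1) = d4e (A₂ 0) (A₂ 1) (A₃ 0) (A₃ 1) * (-(d4e (A₁ 0) (A₁ 2) (A₃ 0) (A₃ 1))) := by
  simp only [pfun, map_sub, _root_.map_mul, eval_X, trif0, trif1, trif2]
  linear_combination (-1 : ℂ) * omega_id (A₁ 0) (A₁ 2) (A₂ 0) (A₂ 1) (A₃ 0) (A₃ 1)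

lemma hent22 (A₁ A₂ A₃ : Matrix (Fin 3) (Fin 4) ℂ) :
    eval (trifocalTensor A₁ A₂ A₃) (pfun 2 2) = d4e (A₂ 0) (A₂ 1) (A₃ 0) (A₃ 1) * (d4e (A₁ 0) (A₁ 1) (A₃ 0) (A₃ 1)) := by
  simp only [pfun, map_sub, _root_.map_mul, eval_X, trif0, trif1, trif2]
  linear_combination omega_id (A₁ 0) (A₁ 1) (A₂ 0) (A₂ 1) (A₃ 0) (A₃ 1)

lemma pPoly_vanish (A₁ A₂ A₃ : Matrix (Fin 3) (Fin 4) ℂ) :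
    eval (trifocalTensor A₁ A₂ A₃) pPoly = 0 := by
  rw [pPoly, RingHom.map_det, Matrix.det_fin_three]
  simp only [RingHom.mapMatrix_apply, Matrix.map_apply, Matrix.of_apply]
  rw [hent00, hent01, hent02, hent10, hent11, hent12, hent20, hent21, hent22]
  have hx := xC_det A₁ A₃
  rw [Matrix.det_fin_three] at hx
  simp only [Matrix.of_apply, xCfun] at hx
  linear_combination (d4e (A₂ 1) (A₂ 2) (A₃ 1) (A₃ 2) * d4e (A₂ 0) (A₂ 2) (A₃ 0) (A₃ 2) *
    d4e (A₂ 0) (A₂ 1) (A₃ 0) (A₃ 1)) * hx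


lemma evalp_eps : eval eps pPoly = 1 := by
  rw [pPoly, RingHom.map_det, Matrix.det_fin_three]
  simp only [RingHom.mapMatrix_apply, Matrix.map_apply, Matrix.of_apply, pfun, map_sub,
    _root_.map_mul, eval_X]
  norm_num [eps]
  simp (config := { decide := true })

/-- The Levi-Civita tensor is in none of the other three components of the zero set
of the cubics. -/
theorem eps_not_in_other_components :
    eps ∉ Sub233 ∧ eps ∉ Sub323 ∧ eps ∉ zariskiClosure TT := by
  refine ⟨?_, ?_, ?_⟩
  · rintro ⟨l, hl, h⟩
    apply hl
    have h0 := h 1 2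
    have h1 := h 2 0
    have h2 := h 0 1
    rw [Fin.sum_univ_three] at h0 h1 h2
    simp (config := { decide := true }) [eps] at h0 h1 h2
    funext i
    fin_cases i
    · simpa using h0
    · simpa using h1
    · simpa using h2
  · rintro ⟨m, hm, h⟩
    apply hm
    have h0 := h 2 1
    have h1 := h 0 2
    have h2 := h 1 0
    rw [Fin.sum_univ_three] at h0 h1 h2
    simp (config := { decide := true }) [eps] at h0 h1 h2
    funext j
    fin_cases j
    · simpa using h0
    · simpa using h1
    · simpa using h2
  · intro hcl
    have hp : pPoly ∈ MvPolynomial.vanishingIdeal ℂ TT := by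
      rw [MvPolynomial.mem_vanishingIdeal_iff]
      rintro T ⟨A₁, A₂, A₃, rfl⟩
      exact pPoly_vanish A₁ A₂ A₃
    have hz : eval eps pPoly = 0 := by
      have := hcl
      rw [zariskiClosure, MvPolynomial.mem_zeroLocus_iff] at this
      exact this pPoly hp
    rw [evalp_eps] at hz
    exact one_ne_zero hz
end
end

section
/- The normal form of Nurmiev's nilpotent orbit 17 lies in the closure of the orbit of the Levi-Civita tensor: the tensor N₁₇ with N₁₇(1,1,2) = N₁₇(1,2,1) = N₁₇(2,1,3) = N₁₇(2,3,1) = 1 and all other entries 0 belongs to the Zariski closure of {(g₁,g₂,g₃)·ε : g₁, g₂, g₃ ∈ GL₃(ℂ)}. -/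
open MvPolynomial Matrix

noncomputable section

/-- The normal form of Nurmiev's nilpotent orbit 17 (0-indexed nonzero entries
`(0,0,1), (0,1,0), (1,0,2), (1,2,0)`). -/
def N17 : Tensor := fun p =>
  if p = (0, 0, 1) ∨ p = (0, 1, 0) ∨ p = (1, 0, 2) ∨ p = (1, 2, 0) then 1 else 0

/-- The direction tensor of the degeneration curve towards `N17`. -/
def S17 : Tensor := fun p => if p = (2,1,2) then 1 else if p = (2,2,1) then -1 else 0

/-- For every nonzero `t`, the tensor `N17 + t • S17` lies in the orbit of `ε`. -/
lemma curve_mem_epsOrbit (t : ℂ) (ht : t ≠ 0) :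
    (fun p => N17 p + S17 p * t) ∈ epsOrbit := by
  have hd1 : (!![0,0,1;0,1,0;t,0,0] : Matrix (Fin 3) (Fin 3) ℂ).det ≠ 0 := by
    simp [Matrix.det_fin_three, ht]
  have hd2 : (!![1,0,0;0,-1,0;0,0,1] : Matrix (Fin 3) (Fin 3) ℂ).det ≠ 0 := by
    simp [Matrix.det_fin_three]
  have hd3 : (!![1,0,0;0,1,0;0,0,-1] : Matrix (Fin 3) (Fin 3) ℂ).det ≠ 0 := by
    simp [Matrix.det_fin_three]
  refine ⟨GeneralLinearGroup.mkOfDetNeZero _ hd1, GeneralLinearGroup.mkOfDetNeZero _ hd2,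
    GeneralLinearGroup.mkOfDetNeZero _ hd3, ?_⟩
  funext p
  have hc1 : ((GeneralLinearGroup.mkOfDetNeZero _ hd1 : GL (Fin 3) ℂ) : Matrix (Fin 3) (Fin 3) ℂ)
      = !![0,0,1;0,1,0;t,0,0] := rfl
  have hc2 : ((GeneralLinearGroup.mkOfDetNeZero _ hd2 : GL (Fin 3) ℂ) : Matrix (Fin 3) (Fin 3) ℂ)
      = !![1,0,0;0,-1,0;0,0,1] := rfl
  have hc3 : ((GeneralLinearGroup.mkOfDetNeZero _ hd3 : GL (Fin 3) ℂ) : Matrix (Fin 3) (Fin 3) ℂ)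
      = !![1,0,0;0,1,0;0,0,-1] := rfl
  fin_cases p <;>
    simp [act, eps, N17, S17, hc1, hc2, hc3, Fin.sum_univ_three, Prod.ext_iff]

/-- Orbit 17 lies in the closure of the orbit of the Levi-Civita tensor. -/
theorem N17_mem_closure_epsOrbit : N17 ∈ zariskiClosure epsOrbit := by
  intro f hf
  have h : ∀ t : ℂ, t ≠ 0 → MvPolynomial.eval (fun v => N17 v + S17 v * t) f = 0 := fun t ht =>
    (MvPolynomial.mem_vanishingIdeal_iff.mp hf) _ (curve_mem_epsOrbit t ht)
  set q : Polynomial ℂ :=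
    MvPolynomial.aeval (fun v => Polynomial.C (N17 v) + Polynomial.C (S17 v) * Polynomial.X) f
      with hq
  have hev : ∀ t : ℂ, q.eval t = MvPolynomial.eval (fun v => N17 v + S17 v * t) f := by
    intro t
    have h1 := AlgHom.congr_fun (MvPolynomial.comp_aeval
      (φ := Polynomial.aeval t)
      (f := fun v : Fin 3 × Fin 3 × Fin 3 =>
        Polynomial.C (N17 v) + Polynomial.C (S17 v) * Polynomial.X)) f
    simp only [AlgHom.coe_comp, Function.comp_apply] at h1
    rw [hq, ← Polynomial.coe_aeval_eq_eval, h1]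
    have h2 : (fun v : Fin 3 × Fin 3 × Fin 3 => Polynomial.aeval t
        (Polynomial.C (N17 v) + Polynomial.C (S17 v) * Polynomial.X))
        = fun v => N17 v + S17 v * t := by
      funext v; simp
    rw [h2, ← MvPolynomial.coe_aeval_eq_eval]
    rfl
  have hq0 : q = 0 := by
    apply Polynomial.eq_zero_of_infinite_isRoot
    apply Set.Infinite.mono (s := {t : ℂ | t ≠ 0})
    · intro t ht
      simp only [Set.mem_setOf_eq, Polynomial.IsRoot, hev t, h t ht]
    · exact Set.Finite.infinite_compl (Set.finite_singleton (0:ℂ))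
  have h0 := hev 0
  rw [hq0, Polynomial.eval_zero] at h0
  have hN : (fun v => N17 v + S17 v * (0:ℂ)) = N17 := by funext v; ring
  rw [hN] at h0
  exact h0.symm
end
end

section
/- The set of trifocal tensors is invariant under the action of GL₃(ℂ)³: if T is a trifocal tensor and g₁, g₂, g₃ ∈ GL₃(ℂ), then the tensor (g₁,g₂,g₃)·T with entries ∑_{i',j',k'} (g₁)_{i i'} (g₂)_{j j'} (g₃)_{k k'} T(i',j',k') is also a trifocal tensor. -/
open MvPolynomial Matrix

noncomputable section

/-- Explicit expansion of a 4×4 determinant. -/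
theorem det4_aux (A : Matrix (Fin 4) (Fin 4) ℂ) : A.det =
    A 0 0*A 1 1*A 2 2*A 3 3 - A 0 0*A 1 1*A 2 3*A 3 2 - A 0 0*A 1 2*A 2 1*A 3 3 + A 0 0*A 1 2*A 2 3*A 3 1 + A 0 0*A 1 3*A 2 1*A 3 2 - A 0 0*A 1 3*A 2 2*A 3 1 - A 0 1*A 1 0*A 2 2*A 3 3 + A 0 1*A 1 0*A 2 3*A 3 2 + A 0 1*A 1 2*A 2 0*A 3 3 - A 0 1*A 1 2*A 2 3*A 3 0 - A 0 1*A 1 3*A 2 0*A 3 2 + A 0 1*A 1 3*A 2 2*A 3 0 + A 0 2*A 1 0*A 2 1*A 3 3 - A 0 2*A 1 0*A 2 3*A 3 1 - A 0 2*A 1 1*A 2 0*A 3 3 + A 0 2*A 1 1*A 2 3*A 3 0 + A 0 2*A 1 3*A 2 0*A 3 1 - A 0 2*A 1 3*A 2 1*A 3 0 - A 0 3*A 1 0*A 2 1*A 3 2 + A 0 3*A 1 0*A 2 2*A 3 1 + A 0 3*A 1 1*A 2 0*A 3 2 - A 0 3*A 1 1*A 2 2*A 3 0 - A 0 3*A 1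 2*A 2 0*A 3 1 + A 0 3*A 1 2*A 2 1*A 3 0 := by
  have h3 : (Fin.succ 2 : Fin 4) = 3 := rfl
  have h2 : (Fin.castSucc 2 : Fin 4) = 2 := rfl
  have h1 : (Fin.castSucc 1 : Fin 4) = 1 := rfl
  have h0 : (Fin.castSucc 0 : Fin 4) = 0 := rfl
  simp [Matrix.det_succ_row_zero, Fin.sum_univ_succ, Fin.succAbove, h3, h2, h1, h0]
  ring

/-- Determinant of four explicit rows. -/
def Daux (r₀ r₁ r₂ r₃ : Fin 4 → ℂ) : ℂ := (Matrix.of ![r₀, r₁, r₂, r₃]).det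

theorem tri_eq_Daux (A₁ A₂ A₃ : Matrix (Fin 3) (Fin 4) ℂ) (p) :
    trifocalTensor A₁ A₂ A₃ p =
      Daux (A₁ p.1) (A₂ p.2.1) (A₃ (p.2.2.succAbove 0)) (A₃ (p.2.2.succAbove 1)) := rfl

theorem Daux_exp (r₀ r₁ r₂ r₃ : Fin 4 → ℂ) : Daux r₀ r₁ r₂ r₃ =
    r₀ 0*r₁ 1*r₂ 2*r₃ 3 - r₀ 0*r₁ 1*r₂ 3*r₃ 2 - r₀ 0*r₁ 2*r₂ 1*r₃ 3 + r₀ 0*r₁ 2*r₂ 3*r₃ 1 + r₀ 0*r₁ 3*r₂ 1*r₃ 2 - r₀ 0*r₁ 3*r₂ 2*r₃ 1 - r₀ 1*r₁ 0*r₂ 2*r₃ 3 + r₀ 1*r₁ 0*r₂ 3*r₃ 2 + r₀ 1*r₁ 2*r₂ 0*r₃ 3 - r₀ 1*r₁ 2*r₂ 3*r₃ 0 - r₀ 1*r₁ 3*r₂ 0*r₃ 2 + r₀ 1*r₁ 3*r₂ 2*r₃ 0 + r₀ 2*r₁ 0*r₂ 1*r₃ 3 - r₀ 2*r₁ 0*r₂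 3*r₃ 1 - r₀ 2*r₁ 1*r₂ 0*r₃ 3 + r₀ 2*r₁ 1*r₂ 3*r₃ 0 + r₀ 2*r₁ 3*r₂ 0*r₃ 1 - r₀ 2*r₁ 3*r₂ 1*r₃ 0 - r₀ 3*r₁ 0*r₂ 1*r₃ 2 + r₀ 3*r₁ 0*r₂ 2*r₃ 1 + r₀ 3*r₁ 1*r₂ 0*r₃ 2 - r₀ 3*r₁ 1*r₂ 2*r₃ 0 - r₀ 3*r₁ 2*r₂ 0*r₃ 1 + r₀ 3*r₁ 2*r₂ 1*r₃ 0 := by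
  rw [Daux, det4_aux]
  simp only [Matrix.of_apply, Matrix.cons_val', Matrix.cons_val_zero, Matrix.cons_val_one,
    Matrix.head_cons, Matrix.cons_val_two, Matrix.cons_val_three, Matrix.vecHead, Matrix.vecTail,
    Matrix.empty_val', Matrix.cons_val_fin_one, Function.comp]
  rfl

theorem Daux_lin0 (c : Fin 3 → ℂ) (u : Fin 3 → Fin 4 → ℂ) (r₁ r₂ r₃ : Fin 4 → ℂ) :
    Daux (fun x => ∑ i, c i * u i x) r₁ r₂ r₃ = ∑ i, c i * Daux (u i) r₁ r₂ r₃ := by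
  simp only [Daux_exp, Fin.sum_univ_three]; ring

theorem Daux_lin1 (c : Fin 3 → ℂ) (u : Fin 3 → Fin 4 → ℂ) (r₀ r₂ r₃ : Fin 4 → ℂ) :
    Daux r₀ (fun x => ∑ i, c i * u i x) r₂ r₃ = ∑ i, c i * Daux r₀ (u i) r₂ r₃ := by
  simp only [Daux_exp, Fin.sum_univ_three]; ring

theorem Daux_pair (M : Matrix (Fin 3) (Fin 3) ℂ) (u : Fin 3 → Fin 4 → ℂ) (r₀ r₁ : Fin 4 → ℂ)
    (a b : Fin 3) :
    Daux r₀ r₁ (fun x => ∑ q, M a q * u q x) (fun x => ∑ q, M b q * u q x) =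
      (M a 0 * M b 1 - M a 1 * M b 0) * Daux r₀ r₁ (u 0) (u 1) +
      (M a 0 * M b 2 - M a 2 * M b 0) * Daux r₀ r₁ (u 0) (u 2) +
      (M a 1 * M b 2 - M a 2 * M b 1) * Daux r₀ r₁ (u 1) (u 2) := by
  simp only [Daux_exp, Fin.sum_univ_three]; ring

/-- The 2×2 "complementary minor" of a 3×3 matrix. -/
def cofAux (N : Matrix (Fin 3) (Fin 3) ℂ) (k k' : Fin 3) : ℂ :=
  N (k.succAbove 0) (k'.succAbove 0) * N (k.succAbove 1) (k'.succAbove 1) -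
    N (k.succAbove 0) (k'.succAbove 1) * N (k.succAbove 1) (k'.succAbove 0)

theorem key_aux (A₁ A₂ A₃ : Matrix (Fin 3) (Fin 4) ℂ) (N₁ N₂ N₃ : Matrix (Fin 3) (Fin 3) ℂ)
    (i j k : Fin 3) :
    trifocalTensor (N₁ * A₁) (N₂ * A₂) (N₃ * A₃) (i, j, k) =
      ∑ i', ∑ j', ∑ k',
        N₁ i i' * N₂ j j' * cofAux N₃ k k' * trifocalTensor A₁ A₂ A₃ (i', j', k') := by
  have hrow : ∀ (N : Matrix (Fin 3) (Fin 3) ℂ) (A : Matrix (Fin 3) (Fin 4) ℂ) (a : Fin 3),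
      (N * A) a = fun x => ∑ t, N a t * A t x := fun N A a => funext fun x => Matrix.mul_apply
  have s00 : ((0:Fin 3).succAbove 0) = 1 := rfl
  have s01 : ((0:Fin 3).succAbove 1) = 2 := rfl
  have s10 : ((1:Fin 3).succAbove 0) = 0 := rfl
  have s11 : ((1:Fin 3).succAbove 1) = 2 := rfl
  have s20 : ((2:Fin 3).succAbove 0) = 0 := rfl
  have s21 : ((2:Fin 3).succAbove 1) = 1 := rfl
  rw [tri_eq_Daux]
  simp only [hrow]
  rw [Daux_lin0 (N₁ i) A₁]
  simp only [Daux_lin1 (N₂ j) A₂, Daux_pair N₃ A₃]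
  simp only [cofAux, tri_eq_Daux, s00, s01, s10, s11, s20, s21, Fin.sum_univ_three]
  ring

/-- The set of trifocal tensors is invariant under the action of `GL₃(ℂ)³`. -/
theorem TT_invariant_under_GL (A₁ A₂ A₃ : Matrix (Fin 3) (Fin 4) ℂ)
    (g₁ g₂ g₃ : GL (Fin 3) ℂ) :
    act g₁ g₂ g₃ (trifocalTensor A₁ A₂ A₃) ∈ TT := by
  obtain ⟨c, hc⟩ : ∃ c : ℂ, c ^ 2 = (g₃ : Matrix (Fin 3) (Fin 3) ℂ).det :=
    IsAlgClosed.exists_pow_nat_eq _ two_pos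
  set G : Matrix (Fin 3) (Fin 3) ℂ := ((g₃⁻¹ : GL (Fin 3) ℂ) : Matrix (Fin 3) (Fin 3) ℂ) with hGdef
  have hG1 : (g₃ : Matrix (Fin 3) (Fin 3) ℂ) * G = 1 := by
    rw [hGdef, ← Units.val_mul, mul_inv_cancel, Units.val_one]
  have hinv : G⁻¹ = (g₃ : Matrix (Fin 3) (Fin 3) ℂ) := Matrix.inv_eq_left_inv hG1
  have hdet : (g₃ : Matrix (Fin 3) (Fin 3) ℂ).det * G.det = 1 := by
    rw [← Matrix.det_mul, hG1, Matrix.det_one]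
  have hdetG : G.det⁻¹ = (g₃ : Matrix (Fin 3) (Fin 3) ℂ).det := by
    rw [← inv_eq_of_mul_eq_one_right hdet, inv_inv]
  have hadj : (g₃ : Matrix (Fin 3) (Fin 3) ℂ) =
      (g₃ : Matrix (Fin 3) (Fin 3) ℂ).det • G.adjugate := by
    have h := Matrix.inv_def G
    rw [hinv, Ring.inverse_eq_inv', hdetG] at h
    exact h
  set d : Fin 3 → ℂ := ![1, -1, 1] with hd
  set N₃ : Matrix (Fin 3) (Fin 3) ℂ := Matrix.of fun a b => c * (d a * (d b * G b a)) with hN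
  have hcof : ∀ k k', cofAux N₃ k k' = (g₃ : Matrix (Fin 3) (Fin 3) ℂ) k k' := by
    have hadj' : ∀ k k' : Fin 3, (g₃ : Matrix (Fin 3) (Fin 3) ℂ) k k' =
        (g₃ : Matrix (Fin 3) (Fin 3) ℂ).det * G.adjugate k k' := by
      intro k k'
      conv_lhs => rw [hadj]
      simp [smul_eq_mul]
    intro k k'
    rw [hadj' k k', ← hc, Matrix.adjugate_fin_three]
    fin_cases k <;> fin_cases k' <;>
      simp [cofAux, hN, hd, Fin.succAbove] <;> ring
  refine ⟨(g₁ : Matrix (Fin 3) (Fin 3) ℂ) * A₁, (g₂ : Matrix (Fin 3) (Fin 3) ℂ) * A₂,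
    N₃ * A₃, ?_⟩
  funext p
  obtain ⟨i, j, k⟩ := p
  rw [key_aux]
  simp only [hcof, act]
end
end

section
/- The normal form T₀ of a general trifocal tensor is itself a trifocal tensor: there exist complex 3×4 matrices A₁, A₂, A₃ whose associated trifocal tensor equals the tensor T₀ with T₀(1,2,1) = T₀(3,1,1) = T₀(2,2,2) = T₀(3,3,3) = 1 and all other entries 0. -/
open MvPolynomial Matrix

noncomputable section

lemma det4_aux_s19 (a b c d : Fin 4 → ℂ) :
    (Matrix.of ![a, b, c, d]).det =
      a 0 * b 1 * c 2 * d 3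
      - a 0 * b 1 * c 3 * d 2
      - a 0 * b 2 * c 1 * d 3
      + a 0 * b 2 * c 3 * d 1
      + a 0 * b 3 * c 1 * d 2
      - a 0 * b 3 * c 2 * d 1
      - a 1 * b 0 * c 2 * d 3
      + a 1 * b 0 * c 3 * d 2
      + a 1 * b 2 * c 0 * d 3
      - a 1 * b 2 * c 3 * d 0
      - a 1 * b 3 * c 0 * d 2
      + a 1 * b 3 * c 2 * d 0
      + a 2 * b 0 * c 1 * d 3
      - a 2 * b 0 * c 3 * d 1
      - a 2 * b 1 * c 0 * d 3
      + a 2 * b 1 * c 3 * d 0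
      + a 2 * b 3 * c 0 * d 1
      - a 2 * b 3 * c 1 * d 0
      - a 3 * b 0 * c 1 * d 2
      + a 3 * b 0 * c 2 * d 1
      + a 3 * b 1 * c 0 * d 2
      - a 3 * b 1 * c 2 * d 0
      - a 3 * b 2 * c 0 * d 1
      + a 3 * b 2 * c 1 * d 0 := by
  simp [Matrix.det_succ_row_zero, Fin.sum_univ_succ]
  norm_num [Fin.succAbove, Fin.castSucc, Fin.succ, Fin.castAdd, Fin.castLE, Fin.lt_def]
  simp only [show ((⟨3, by omega⟩ : Fin 4)) = 3 from rfl,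
    show ((⟨2, by omega⟩ : Fin 4)) = 2 from rfl]
  ring

/-- The normal form `T₀` is itself a trifocal tensor. -/
theorem T0_is_trifocal :
    ∃ A₁ A₂ A₃ : Matrix (Fin 3) (Fin 4) ℂ, trifocalTensor A₁ A₂ A₃ = T₀ := by
  refine ⟨!![1,0,0,0; 0,-1,0,0; 0,0,0,1],
    !![-1,0,0,0; 0,0,0,1; 0,0,-1,0],
    !![1,0,0,0; 0,1,0,0; 0,0,1,0], ?_⟩
  funext p
  obtain ⟨i, j, k⟩ := p
  fin_cases i <;> fin_cases j <;> fin_cases k <;>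
    simp [trifocalTensor, T₀, det4_aux_s19, Fin.succAbove, Prod.ext_iff, Matrix.vecHead, Matrix.vecTail]
end
end
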